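/- Iterated scattering bound: let V = {−1,+1}, let K₁ : V × V → [0, C_K], σ₁(w) = Σ_{w'} K₁(w',w), L₁(f)(w) = Σ_{w'} K₁(w,w') f(w'), L̃₁(g)(w) = Σ_{w'} K₁(w',w) g(w'). Let φ₁ : ℝ → [0,∞) and μ₁ : ℝ → [0,∞) be integrable and bounded, and suppose C_{φμ} is a constant with ∫_ℝ φ₁(x + a) μ₁(x − T + b) dx ≤ C_{φμ} for all a, b ∈ ℝ. Define f⁰(t,x,w) = e^{−t σ₁(w)} φ₁(x − wt) and g⁰(t,x,w) = e^{−(T−t) σ₁(w)} μ₁(x + w(T−t)), and recursively, for k, n ≥ 1, let f^{(k)} be the mild solution of ∂_t f^{(k)} + w ∂_x f^{(k)} = −σ₁ f^{(k)} + L₁(f^{(k−1)}) with zero initial datum and g^{(n)} the mild solution of −∂_t g^{(n)} − w ∂_x g^{(n)} = −σ₁ g^{(n)} + L̃₁(g^{(n−1)}) with zero final datum. Then for all k, n ≥ 0 and all v, v' ∈ V: 0 ≤ ∫₀^T ∫_ℝ f^{(k)}(t,x,v') g^{(n)}(t,x,v) dx dt ≤ (2 C_K)^{n+k} T^{n+k+1}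 C_{φμ}, and hence |∫₀^T ∫_I f^{(k)}(t,x,v') (g^{(n)}(t,x,v') − g^{(n)}(t,x,v)) dx dt| ≤ 2 (2 C_K)^{n+k} T^{n+k+1} C_{φμ} for every measurable I ⊆ ℝ. -/

import Mathlib

open MeasureTheory Real Set

noncomputable section

namespace IterScat

lemma null_affine {a : ℝ} (ha : a ≠ 0) (b : ℝ) {N : Set ℝ} (hN : volume N = 0) :
    volume ((fun s : ℝ => a * s + b) ⁻¹' N) = 0 := by
  obtain ⟨N', hsub, hNm, hN'⟩ := exists_measurable_superset_of_null hN
  have hsub2 : (fun s : ℝ => a * s + b) ⁻¹' N ⊆ (fun s : ℝ => a * s + b) ⁻¹' N' :=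
    fun s hs => hsub hs
  refine measure_mono_null hsub2 ?_
  have h1 : (fun s : ℝ => a * s + b) = (fun y : ℝ => y + b) ∘ (fun s : ℝ => a * s) := rfl
  rw [h1, Set.preimage_comp]
  have h2 : volume ((fun y : ℝ => y + b) ⁻¹' N') = 0 := by
    rw [(measurePreserving_add_right volume b).measure_preimage hNm.nullMeasurableSet]
    exact hN'
  obtain ⟨N'', hsub', hNm', hN''⟩ := exists_measurable_superset_of_null h2
  refine measure_mono_null (Set.preimage_mono hsub') ?_
  rw [← Measure.map_apply (measurable_const_mul a) hNm', Real.map_volume_mul_left ha]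
  simp [hN'']

lemma mem_V {v : ℝ} (hv : v ∈ ({1, -1} : Set ℝ)) : v = 1 ∨ v = -1 := by
  simpa using hv

lemma neg_mem_V {v : ℝ} (hv : v ∈ ({1, -1} : Set ℝ)) : -v ∈ ({1, -1} : Set ℝ) := by
  rcases mem_V hv with rfl | rfl <;> norm_num

lemma one_mem_V : (1 : ℝ) ∈ ({1, -1} : Set ℝ) := by norm_num
lemma negone_mem_V : (-1 : ℝ) ∈ ({1, -1} : Set ℝ) := by norm_num

/-- bounded measurable on a finite-measure set implies integrable there -/
lemma integrableOn_of_bounded' {f : ℝ → ℝ} {s : Set ℝ} (hvol : volume s ≠ ⊤)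
    (hm : AEStronglyMeasurable f (volume.restrict s)) {C : ℝ}
    (hb : ∀ᵐ x ∂(volume.restrict s), ‖f x‖ ≤ C) : IntegrableOn f s := by
  have : IsFiniteMeasure (volume.restrict s) := by
    constructor
    rw [Measure.restrict_apply_univ]
    exact lt_top_iff_ne_top.mpr hvol
  exact ⟨hm, HasFiniteIntegral.of_bounded hb⟩

/-- The Duhamel iteration family. -/
def duh (K : ℝ → ℝ → ℝ) (σ : ℝ → ℝ) (ψ : ℝ → ℝ) : ℕ → ℝ → ℝ → ℝ → ℝ
  | 0 => fun t x w => Real.exp (-t * σ w) * ψ (x - w * t)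
  | (k+1) => fun t x w => ∫ s in (0:ℝ)..t, Real.exp (-s * σ w) *
      (K w 1 * duh K σ ψ k (t - s) (x - w * s) 1 +
       K w (-1) * duh K σ ψ k (t - s) (x - w * s) (-1))

/-- all data of one Duhamel family -/
structure Fam (CK T : ℝ) where
  K : ℝ → ℝ → ℝ
  σ : ℝ → ℝ
  ψ : ℝ → ℝ
  Cψ : ℝ
  hK : ∀ w ∈ ({1, -1} : Set ℝ), ∀ w' ∈ ({1, -1} : Set ℝ), 0 ≤ K w w' ∧ K w w' ≤ CK
  hσ : ∀ w ∈ ({1, -1} : Set ℝ), 0 ≤ σ w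
  hψm : Measurable ψ
  hψ0 : ∀ x, 0 ≤ ψ x
  hCψ : 0 ≤ Cψ
  hψC : ∀ x, ψ x ≤ Cψ
  hψi : Integrable ψ

variable {CK T : ℝ}

lemma duh_meas (F : Fam CK T) : ∀ k, ∀ w : ℝ, Measurable (fun p : ℝ × ℝ => duh F.K F.σ F.ψ k p.1 p.2 w) := by
  intro k
  induction k with
  | zero =>
    intro w
    simp only [duh]
    exact ((measurable_fst.neg.mul_const (F.σ w)).exp).mul
      (F.hψm.comp (measurable_snd.sub (measurable_fst.const_mul w)))
  | succ k ih =>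
    intro w
    have hbody : Measurable (fun q : (ℝ × ℝ) × ℝ => Real.exp (-q.2 * F.σ w) *
        (F.K w 1 * duh F.K F.σ F.ψ k (q.1.1 - q.2) (q.1.2 - w * q.2) 1 +
         F.K w (-1) * duh F.K F.σ F.ψ k (q.1.1 - q.2) (q.1.2 - w * q.2) (-1))) := by
      have hmap : Measurable (fun q : (ℝ × ℝ) × ℝ => ((q.1.1 - q.2 : ℝ), (q.1.2 - w * q.2 : ℝ))) :=
        ((measurable_fst.fst.sub measurable_snd).prodMk
          (measurable_fst.snd.sub (measurable_snd.const_mul w)))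
      exact ((measurable_snd.neg.mul_const (F.σ w)).exp).mul
        ((((ih 1).comp hmap).const_mul _).add (((ih (-1)).comp hmap).const_mul _))
    set body : (ℝ × ℝ) × ℝ → ℝ := fun q => Real.exp (-q.2 * F.σ w) *
        (F.K w 1 * duh F.K F.σ F.ψ k (q.1.1 - q.2) (q.1.2 - w * q.2) 1 +
         F.K w (-1) * duh F.K F.σ F.ψ k (q.1.1 - q.2) (q.1.2 - w * q.2) (-1)) with hbodydef
    have hs1 : MeasurableSet {q : (ℝ × ℝ) × ℝ | q.2 ∈ Set.Ioc (0:ℝ) q.1.1} := by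
      simp only [Set.mem_Ioc, Set.setOf_and]
      exact (measurableSet_lt measurable_const measurable_snd).inter
        (measurableSet_le measurable_snd measurable_fst.fst)
    have hs2 : MeasurableSet {q : (ℝ × ℝ) × ℝ | q.2 ∈ Set.Ioc q.1.1 (0:ℝ)} := by
      simp only [Set.mem_Ioc, Set.setOf_and]
      exact (measurableSet_lt measurable_fst.fst measurable_snd).inter
        (measurableSet_le measurable_snd measurable_const)
    have hG1 : Measurable (fun q : (ℝ × ℝ) × ℝ => if q.2 ∈ Set.Ioc (0:ℝ) q.1.1 then body q else 0) :=
      Measurable.ite hs1 hbody measurable_const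
    have hG2 : Measurable (fun q : (ℝ × ℝ) × ℝ => if q.2 ∈ Set.Ioc q.1.1 (0:ℝ) then body q else 0) :=
      Measurable.ite hs2 hbody measurable_const
    have hu1 : Measurable (Function.uncurry
        (fun (p : ℝ × ℝ) (s : ℝ) => if s ∈ Set.Ioc (0:ℝ) p.1 then body (p, s) else 0)) := hG1
    have hu2 : Measurable (Function.uncurry
        (fun (p : ℝ × ℝ) (s : ℝ) => if s ∈ Set.Ioc p.1 (0:ℝ) then body (p, s) else 0)) := hG2
    have hM1 : Measurable (fun p : ℝ × ℝ =>
        ∫ s, (fun (p : ℝ × ℝ) (s : ℝ) => if s ∈ Set.Ioc (0:ℝ) p.1 then body (p, s) else 0) p s) :=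
      (hu1.stronglyMeasurable.integral_prod_right).measurable
    have hM2 : Measurable (fun p : ℝ × ℝ =>
        ∫ s, (fun (p : ℝ × ℝ) (s : ℝ) => if s ∈ Set.Ioc p.1 (0:ℝ) then body (p, s) else 0) p s) :=
      (hu2.stronglyMeasurable.integral_prod_right).measurable
    have heq : (fun p : ℝ × ℝ => duh F.K F.σ F.ψ (k+1) p.1 p.2 w) =
        fun p : ℝ × ℝ => (∫ s, (fun (p : ℝ × ℝ) (s : ℝ) => if s ∈ Set.Ioc (0:ℝ) p.1 then body (p, s) else 0) p s)
          - (∫ s, (fun (p : ℝ × ℝ) (s : ℝ) => if s ∈ Set.Ioc p.1 (0:ℝ) then body (p, s) else 0) p s) := by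
      funext p
      show intervalIntegral _ 0 p.1 volume = _
      rw [intervalIntegral]
      congr 1
      · rw [← integral_indicator measurableSet_Ioc]
        simp only [hbodydef, Set.indicator_apply, Set.mem_Ioc]
      · rw [← integral_indicator measurableSet_Ioc]
        simp only [hbodydef, Set.indicator_apply, Set.mem_Ioc]
    rw [heq]
    exact hM1.sub hM2

lemma duh_meas_x (F : Fam CK T) (k : ℕ) (w t : ℝ) :
    Measurable (fun x => duh F.K F.σ F.ψ k t x w) :=
  (duh_meas F k w).comp (measurable_const.prodMk measurable_id)

lemma duh_pt (F : Fam CK T) (hCK : 0 ≤ CK) (hT : 0 < T) :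
    ∀ k, ∀ w ∈ ({1, -1} : Set ℝ), ∀ t ∈ Icc (0:ℝ) T, ∀ x,
      0 ≤ duh F.K F.σ F.ψ k t x w ∧ duh F.K F.σ F.ψ k t x w ≤ (2*CK*T)^k * F.Cψ := by
  intro k
  induction k with
  | zero =>
    intro w hw t ht x
    have hσw := F.hσ w hw
    have hexp : Real.exp (-t * F.σ w) ≤ 1 := by
      rw [Real.exp_le_one_iff]; nlinarith [ht.1]
    have hexp0 : (0:ℝ) < Real.exp (-t * F.σ w) := Real.exp_pos _
    simp only [duh, pow_zero, one_mul]
    constructor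
    · exact mul_nonneg hexp0.le (F.hψ0 _)
    · nlinarith [F.hψC (x - w * t), F.hψ0 (x - w * t)]
  | succ k ih =>
    intro w hw t ht x
    obtain ⟨ht0, htT⟩ := ht
    have hKb1 := F.hK w hw 1 one_mem_V
    have hKb2 := F.hK w hw (-1) negone_mem_V
    have hσw := F.hσ w hw
    set B : ℝ := (2*CK*T)^k * F.Cψ with hB
    have hBnn : 0 ≤ B := mul_nonneg (pow_nonneg (by nlinarith) k) F.hCψ
    set f : ℝ → ℝ := fun s => Real.exp (-s * F.σ w) *
      (F.K w 1 * duh F.K F.σ F.ψ k (t - s) (x - w * s) 1 +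
       F.K w (-1) * duh F.K F.σ F.ψ k (t - s) (x - w * s) (-1)) with hf
    have hbd : ∀ s ∈ Icc (0:ℝ) t, 0 ≤ f s ∧ f s ≤ 2*CK*B := by
      intro s hs
      have hts : t - s ∈ Icc (0:ℝ) T := ⟨by linarith [hs.2], by linarith [hs.1]⟩
      obtain ⟨l1, u1⟩ := ih 1 one_mem_V (t - s) hts (x - w * s)
      obtain ⟨l2, u2⟩ := ih (-1) negone_mem_V (t - s) hts (x - w * s)
      have hexp : Real.exp (-s * F.σ w) ≤ 1 := by
        rw [Real.exp_le_one_iff]; nlinarith [hs.1]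
      have hexp0 : (0:ℝ) < Real.exp (-s * F.σ w) := Real.exp_pos _
      constructor
      · have : 0 ≤ F.K w 1 * duh F.K F.σ F.ψ k (t - s) (x - w * s) 1 +
            F.K w (-1) * duh F.K F.σ F.ψ k (t - s) (x - w * s) (-1) := by
          nlinarith [hKb1.1, hKb2.1]
        exact mul_nonneg hexp0.le this
      · have h1 : F.K w 1 * duh F.K F.σ F.ψ k (t - s) (x - w * s) 1 ≤ CK * B :=
          mul_le_mul hKb1.2 u1 l1 hCK
        have h2 : F.K w (-1) * duh F.K F.σ F.ψ k (t - s) (x - w * s) (-1) ≤ CK * B :=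
          mul_le_mul hKb2.2 u2 l2 hCK
        have hnn : 0 ≤ F.K w 1 * duh F.K F.σ F.ψ k (t - s) (x - w * s) 1 +
            F.K w (-1) * duh F.K F.σ F.ψ k (t - s) (x - w * s) (-1) := by
          nlinarith [hKb1.1, hKb2.1]
        calc f s ≤ 1 * (F.K w 1 * duh F.K F.σ F.ψ k (t - s) (x - w * s) 1 +
            F.K w (-1) * duh F.K F.σ F.ψ k (t - s) (x - w * s) (-1)) :=
              mul_le_mul_of_nonneg_right hexp hnn
          _ ≤ 2*CK*B := by linarith
    have hmeasf : Measurable f := by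
      have hmap : Measurable (fun s : ℝ => ((t - s : ℝ), (x - w * s : ℝ))) :=
        (measurable_const.sub measurable_id).prodMk
          (measurable_const.sub (measurable_id.const_mul w))
      exact ((measurable_id.neg.mul_const _).exp).mul
        ((((duh_meas F k 1).comp hmap).const_mul _).add
          (((duh_meas F k (-1)).comp hmap).const_mul _))
    have hii : IntervalIntegrable f volume 0 t := by
      rw [intervalIntegrable_iff_integrableOn_Ioc_of_le ht0]
      refine integrableOn_of_bounded' (C := 2*CK*B)
        (by rw [Real.volume_Ioc]; exact ENNReal.ofReal_ne_top) hmeasf.aestronglyMeasurable ?_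
      filter_upwards [ae_restrict_mem measurableSet_Ioc] with s hs
      obtain ⟨hl, hu⟩ := hbd s (Ioc_subset_Icc_self hs)
      rw [Real.norm_of_nonneg hl]; exact hu
    constructor
    · exact intervalIntegral.integral_nonneg ht0 (fun u hu => (hbd u hu).1)
    · calc duh F.K F.σ F.ψ (k+1) t x w ≤ ∫ _ in (0:ℝ)..t, 2*CK*B :=
          intervalIntegral.integral_mono_on ht0 hii intervalIntegrable_const
            (fun s hs => (hbd s hs).2)
      _ = t * (2*CK*B) := by rw [intervalIntegral.integral_const]; simp [smul_eq_mul]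
      _ ≤ T * (2*CK*B) := by
          have h2 : (0:ℝ) ≤ 2*CK*B := by nlinarith [mul_nonneg hCK hBnn]
          exact mul_le_mul_of_nonneg_right htT h2
      _ = (2*CK*T)^(k+1) * F.Cψ := by rw [hB, pow_succ]; ring

lemma duh_int (F : Fam CK T) (hCK : 0 ≤ CK) (hT : 0 < T) :
    ∀ k, ∀ w ∈ ({1, -1} : Set ℝ), ∀ t ∈ Icc (0:ℝ) T,
      Integrable (fun x => duh F.K F.σ F.ψ k t x w) ∧
      (∫ x, duh F.K F.σ F.ψ k t x w) ≤ (2*CK*T)^k * (∫ x, F.ψ x) := by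
  have hIψ : 0 ≤ ∫ x, F.ψ x := integral_nonneg F.hψ0
  intro k
  induction k with
  | zero =>
    intro w hw t ht
    have hσw := F.hσ w hw
    have hexp : Real.exp (-t * F.σ w) ≤ 1 := by
      rw [Real.exp_le_one_iff]; nlinarith [ht.1]
    constructor
    · simp only [duh]
      exact (F.hψi.comp_sub_right (w*t)).const_mul _
    · simp only [duh, pow_zero, one_mul]
      rw [MeasureTheory.integral_const_mul, integral_sub_right_eq_self (fun y => F.ψ y) (w*t)]
      nlinarith [Real.exp_pos (-t * F.σ w)]
  | succ k ih =>
    intro w hw t ht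
    obtain ⟨ht0, htT⟩ := ht
    have hKb1 := F.hK w hw 1 one_mem_V
    have hKb2 := F.hK w hw (-1) negone_mem_V
    have hσw := F.hσ w hw
    set bodyf : ℝ → ℝ → ℝ := fun s x => Real.exp (-s * F.σ w) *
      (F.K w 1 * duh F.K F.σ F.ψ k (t - s) (x - w * s) 1 +
       F.K w (-1) * duh F.K F.σ F.ψ k (t - s) (x - w * s) (-1)) with hbodyf
    have hmeas : Measurable (Function.uncurry bodyf) := by
      have hmap1 : Measurable fun q : ℝ × ℝ => ((t - q.1 : ℝ), (q.2 - w * q.1 : ℝ)) :=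
        (measurable_const.sub measurable_fst).prodMk
          (measurable_snd.sub (measurable_fst.const_mul w))
      exact ((measurable_fst.neg.mul_const _).exp).mul
        ((((duh_meas F k 1).comp hmap1).const_mul _).add
          (((duh_meas F k (-1)).comp hmap1).const_mul _))
    have hsub : ∀ s ∈ Ioc (0:ℝ) t, (t - s) ∈ Icc (0:ℝ) T :=
      fun s hs => ⟨by linarith [hs.2], by linarith [hs.1]⟩
    have hsecInt : ∀ s ∈ Ioc (0:ℝ) t, Integrable (fun x => bodyf s x) := by
      intro s hs
      have h1 := (ih 1 one_mem_V (t-s) (hsub s hs)).1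
      have h2 := (ih (-1) negone_mem_V (t-s) (hsub s hs)).1
      exact (((h1.comp_sub_right (w*s)).const_mul _).add
        ((h2.comp_sub_right (w*s)).const_mul _)).const_mul _
    have hsecnn : ∀ s ∈ Ioc (0:ℝ) t, ∀ x, 0 ≤ bodyf s x := by
      intro s hs x
      have p1 := (duh_pt F hCK hT k 1 one_mem_V (t-s) (hsub s hs) (x - w*s)).1
      have p2 := (duh_pt F hCK hT k (-1) negone_mem_V (t-s) (hsub s hs) (x - w*s)).1
      have hex := Real.exp_pos (-s * F.σ w)
      have : 0 ≤ Real.exp (-s * F.σ w) *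
          (F.K w 1 * duh F.K F.σ F.ψ k (t - s) (x - w * s) 1 +
           F.K w (-1) * duh F.K F.σ F.ψ k (t - s) (x - w * s) (-1)) :=
        mul_nonneg hex.le (add_nonneg (mul_nonneg hKb1.1 p1) (mul_nonneg hKb2.1 p2))
      exact this
    have hsecbd : ∀ s ∈ Ioc (0:ℝ) t,
        (∫ x, bodyf s x) ≤ 2*CK*((2*CK*T)^k * (∫ x, F.ψ x)) := by
      intro s hs
      have h1 := ih 1 one_mem_V (t-s) (hsub s hs)
      have h2 := ih (-1) negone_mem_V (t-s) (hsub s hs)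
      have hexp : Real.exp (-s * F.σ w) ≤ 1 := by
        rw [Real.exp_le_one_iff]; nlinarith [hs.1]
      have hI1nn : 0 ≤ ∫ x, duh F.K F.σ F.ψ k (t-s) (x - w*s) 1 :=
        integral_nonneg (fun x => (duh_pt F hCK hT k 1 one_mem_V (t-s) (hsub s hs) (x - w*s)).1)
      have hI2nn : 0 ≤ ∫ x, duh F.K F.σ F.ψ k (t-s) (x - w*s) (-1) :=
        integral_nonneg (fun x => (duh_pt F hCK hT k (-1) negone_mem_V (t-s) (hsub s hs) (x - w*s)).1)
      have e1 : (∫ x, duh F.K F.σ F.ψ k (t-s) (x - w*s) 1) = ∫ x, duh F.K F.σ F.ψ k (t-s) x 1 :=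
        integral_sub_right_eq_self (μ := volume) (fun y => duh F.K F.σ F.ψ k (t-s) y 1) (w*s)
      have e2 : (∫ x, duh F.K F.σ F.ψ k (t-s) (x - w*s) (-1)) = ∫ x, duh F.K F.σ F.ψ k (t-s) x (-1) :=
        integral_sub_right_eq_self (μ := volume) (fun y => duh F.K F.σ F.ψ k (t-s) y (-1)) (w*s)
      have hcalc : (∫ x, bodyf s x) = Real.exp (-s * F.σ w) *
          (F.K w 1 * ∫ x, duh F.K F.σ F.ψ k (t-s) (x - w*s) 1) +
          Real.exp (-s * F.σ w) *
          (F.K w (-1) * ∫ x, duh F.K F.σ F.ψ k (t-s) (x - w*s) (-1)) := by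
        have hInt1 : Integrable (fun x => F.K w 1 * duh F.K F.σ F.ψ k (t-s) (x - w*s) 1) :=
          ((h1.1).comp_sub_right (w*s)).const_mul _
        have hInt2 : Integrable (fun x => F.K w (-1) * duh F.K F.σ F.ψ k (t-s) (x - w*s) (-1)) :=
          ((h2.1).comp_sub_right (w*s)).const_mul _
        rw [hbodyf]
        simp only []
        rw [MeasureTheory.integral_const_mul, integral_add hInt1 hInt2,
          MeasureTheory.integral_const_mul, MeasureTheory.integral_const_mul]
        ring
      rw [hcalc, e1, e2]
      have hu1 : (∫ x, duh F.K F.σ F.ψ k (t-s) x 1) ≤ (2*CK*T)^k * (∫ x, F.ψ x) := h1.2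
      have hu2 : (∫ x, duh F.K F.σ F.ψ k (t-s) x (-1)) ≤ (2*CK*T)^k * (∫ x, F.ψ x) := h2.2
      rw [e1] at hI1nn
      rw [e2] at hI2nn
      have g1 : F.K w 1 * (∫ x, duh F.K F.σ F.ψ k (t-s) x 1) ≤
          CK * ((2*CK*T)^k * (∫ x, F.ψ x)) := mul_le_mul hKb1.2 hu1 hI1nn hCK
      have g2 : F.K w (-1) * (∫ x, duh F.K F.σ F.ψ k (t-s) x (-1)) ≤
          CK * ((2*CK*T)^k * (∫ x, F.ψ x)) := mul_le_mul hKb2.2 hu2 hI2nn hCK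
      have q1 : Real.exp (-s * F.σ w) * (F.K w 1 * (∫ x, duh F.K F.σ F.ψ k (t-s) x 1)) ≤
          F.K w 1 * (∫ x, duh F.K F.σ F.ψ k (t-s) x 1) :=
        mul_le_of_le_one_left (mul_nonneg hKb1.1 hI1nn) hexp
      have q2 : Real.exp (-s * F.σ w) * (F.K w (-1) * (∫ x, duh F.K F.σ F.ψ k (t-s) x (-1))) ≤
          F.K w (-1) * (∫ x, duh F.K F.σ F.ψ k (t-s) x (-1)) :=
        mul_le_of_le_one_left (mul_nonneg hKb2.1 hI2nn) hexp
      linarith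
    have hprodInt : Integrable (Function.uncurry bodyf)
        ((volume.restrict (Ioc (0:ℝ) t)).prod volume) := by
      rw [integrable_prod_iff hmeas.aestronglyMeasurable]
      constructor
      · filter_upwards [ae_restrict_mem measurableSet_Ioc] with s hs
        exact hsecInt s hs
      · have hm2 : StronglyMeasurable (fun s : ℝ => ∫ x, ‖bodyf s x‖) :=
          StronglyMeasurable.integral_prod_right (hmeas.norm.stronglyMeasurable)
        refine integrableOn_of_bounded' (C := 2*CK*((2*CK*T)^k * (∫ x, F.ψ x)))
          (by rw [Real.volume_Ioc]; exact ENNReal.ofReal_ne_top) hm2.aestronglyMeasurable ?_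
        filter_upwards [ae_restrict_mem measurableSet_Ioc] with s hs
        simp only [Function.uncurry_apply_pair]
        have heq2 : (∫ x, ‖bodyf s x‖) = ∫ x, bodyf s x := by
          congr 1; funext x; exact Real.norm_of_nonneg (hsecnn s hs x)
        rw [Real.norm_of_nonneg (by rw [heq2]; exact integral_nonneg (hsecnn s hs)), heq2]
        exact hsecbd s hs
    have hfun : (fun x => duh F.K F.σ F.ψ (k+1) t x w) =
        fun x => ∫ s in Ioc (0:ℝ) t, bodyf s x := by
      funext x
      show intervalIntegral _ 0 t volume = _
      rw [intervalIntegral.integral_of_le ht0]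
    constructor
    · rw [hfun]; exact hprodInt.integral_prod_right
    · rw [hfun]
      have hswap := integral_integral_swap (f := bodyf) hprodInt
      rw [← hswap]
      have hconstInt : IntegrableOn (fun _ : ℝ => 2*CK*((2*CK*T)^k * (∫ x, F.ψ x)))
          (Ioc (0:ℝ) t) volume := by
        apply Iff.mpr integrableOn_const_iff
        right
        rw [Real.volume_Ioc]; exact ENNReal.ofReal_lt_top
      have hCnn : 0 ≤ 2*CK*((2*CK*T)^k * (∫ x, F.ψ x)) := by
        have hp : (0:ℝ) ≤ (2*CK*T)^k := pow_nonneg (by nlinarith) k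
        have h := mul_nonneg hp hIψ
        nlinarith [mul_nonneg hCK h]
      calc (∫ s in Ioc (0:ℝ) t, ∫ x, bodyf s x)
          ≤ ∫ _ in Ioc (0:ℝ) t, 2*CK*((2*CK*T)^k * (∫ x, F.ψ x)) :=
            setIntegral_mono_on hprodInt.integral_prod_left hconstInt
              measurableSet_Ioc (fun s hs => hsecbd s hs)
        _ = (volume (Ioc (0:ℝ) t)).toReal * (2*CK*((2*CK*T)^k * (∫ x, F.ψ x))) := by
            rw [setIntegral_const, smul_eq_mul]; rfl
        _ ≤ T * (2*CK*((2*CK*T)^k * (∫ x, F.ψ x))) := by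
            rw [Real.volume_Ioc]
            have : (ENNReal.ofReal (t - 0)).toReal = t := by
              rw [ENNReal.toReal_ofReal (by linarith)]; ring
            rw [this]
            exact mul_le_mul_of_nonneg_right htT hCnn
        _ = (2*CK*T)^(k+1) * (∫ x, F.ψ x) := by rw [pow_succ]; ring

/-- the bilinear statement -/
def BLP (CK T : ℝ) (Fa Fb : Fam CK T) (M : ℝ) (k n : ℕ) : Prop :=
  ∀ v' ∈ ({1, -1} : Set ℝ), ∀ v ∈ ({1, -1} : Set ℝ),
    ∀ t1 ∈ Icc (0:ℝ) T, ∀ t2 ∈ Icc (0:ℝ) T, ∀ c : ℝ,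
    0 ≤ (∫ x, duh Fa.K Fa.σ Fa.ψ k t1 (x + c) v' * duh Fb.K Fb.σ Fb.ψ n t2 x v) ∧
    (∫ x, duh Fa.K Fa.σ Fa.ψ k t1 (x + c) v' * duh Fb.K Fb.σ Fb.ψ n t2 x v) ≤ (2*CK*T)^(k+n) * M

lemma BLP_comm {Fa Fb : Fam CK T} {M : ℝ} {k n : ℕ}
    (h : BLP CK T Fa Fb M k n) : BLP CK T Fb Fa M n k := by
  intro v' hv' v hv t1 ht1 t2 ht2 c
  obtain ⟨h0, h1⟩ := h v hv v' hv' t2 ht2 t1 ht1 (-c)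
  have e : (∫ x, duh Fa.K Fa.σ Fa.ψ k t2 (x + -c) v * duh Fb.K Fb.σ Fb.ψ n t1 x v')
      = ∫ x, duh Fb.K Fb.σ Fb.ψ n t1 (x + c) v' * duh Fa.K Fa.σ Fa.ψ k t2 x v := by
    calc (∫ x, duh Fa.K Fa.σ Fa.ψ k t2 (x + -c) v * duh Fb.K Fb.σ Fb.ψ n t1 x v')
        = ∫ x, (fun y => duh Fb.K Fb.σ Fb.ψ n t1 (y + c) v' * duh Fa.K Fa.σ Fa.ψ k t2 y v)
            (x + -c) := by
          congr 1
          funext x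
          simp only
          rw [show x + -c + c = x from by ring, mul_comm]
      _ = ∫ y, duh Fb.K Fb.σ Fb.ψ n t1 (y + c) v' * duh Fa.K Fa.σ Fa.ψ k t2 y v :=
          integral_add_right_eq_self (μ := volume)
            (fun y => duh Fb.K Fb.σ Fb.ψ n t1 (y + c) v' * duh Fa.K Fa.σ Fa.ψ k t2 y v) (-c)
  rw [← e, Nat.add_comm n k]
  exact ⟨h0, h1⟩

lemma BLP_base (hCK : 0 ≤ CK) (hT : 0 < T) (Fa Fb : Fam CK T) (M : ℝ)
    (hcross : ∀ a b : ℝ, (∫ x, Fa.ψ (x + a) * Fb.ψ (x + b)) ≤ M) :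
    BLP CK T Fa Fb M 0 0 := by
  intro v' hv' v hv t1 ht1 t2 ht2 c
  have hσa := Fa.hσ v' hv'
  have hσb := Fb.hσ v hv
  have hexp1 : Real.exp (-t1 * Fa.σ v') ≤ 1 := by
    rw [Real.exp_le_one_iff]; nlinarith [ht1.1]
  have hexp2 : Real.exp (-t2 * Fb.σ v) ≤ 1 := by
    rw [Real.exp_le_one_iff]; nlinarith [ht2.1]
  simp only [duh, Nat.add_zero, pow_zero, one_mul]
  constructor
  · exact integral_nonneg fun x => mul_nonneg
      (mul_nonneg (Real.exp_pos _).le (Fa.hψ0 _)) (mul_nonneg (Real.exp_pos _).le (Fb.hψ0 _))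
  · have hRHSint : Integrable (fun x => Fa.ψ (x + (c - v' * t1)) * Fb.ψ (x + -(v * t2))) := by
      refine Integrable.bdd_mul (c := Fa.Cψ) (Fb.hψi.comp_add_right _)
        ((Fa.hψm.comp (measurable_id.add_const _)).aestronglyMeasurable) ?_
      exact ae_of_all _ (fun x => by rw [Real.norm_of_nonneg (Fa.hψ0 _)]; exact Fa.hψC _)
    calc (∫ x, (Real.exp (-t1 * Fa.σ v') * Fa.ψ (x + c - v' * t1)) *
            (Real.exp (-t2 * Fb.σ v) * Fb.ψ (x - v * t2)))
        ≤ ∫ x, Fa.ψ (x + (c - v' * t1)) * Fb.ψ (x + -(v * t2)) := by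
          refine integral_mono_of_nonneg (ae_of_all _ fun x => ?_) hRHSint (ae_of_all _ fun x => ?_)
          · exact mul_nonneg (mul_nonneg (Real.exp_pos _).le (Fa.hψ0 _))
              (mul_nonneg (Real.exp_pos _).le (Fb.hψ0 _))
          · simp only
            rw [show x + (c - v' * t1) = x + c - v' * t1 from by ring,
              show x + -(v * t2) = x - v * t2 from by ring]
            have h1 : Real.exp (-t1 * Fa.σ v') * Fa.ψ (x + c - v' * t1) ≤ Fa.ψ (x + c - v' * t1) :=
              mul_le_of_le_one_left (Fa.hψ0 _) hexp1
            have h2 : Real.exp (-t2 * Fb.σ v) * Fb.ψ (x - v * t2) ≤ Fb.ψ (x - v * t2) :=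
              mul_le_of_le_one_left (Fb.hψ0 _) hexp2
            exact mul_le_mul h1 h2
              (mul_nonneg (Real.exp_pos _).le (Fb.hψ0 _)) (Fa.hψ0 _)
      _ ≤ M := hcross _ _

lemma BLP_step (hCK : 0 ≤ CK) (hT : 0 < T) (Fa Fb : Fam CK T) (M : ℝ) (hM : 0 ≤ M)
    (k n : ℕ) (h : BLP CK T Fa Fb M k n) : BLP CK T Fa Fb M (k+1) n := by
  intro v' hv' v hv t1 ht1 t2 ht2 c
  obtain ⟨ht10, ht1T⟩ := ht1
  have hgint : Integrable (fun x => duh Fb.K Fb.σ Fb.ψ n t2 x v) := (duh_int Fb hCK hT n v hv t2 ht2).1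
  have hgnn : ∀ x, 0 ≤ duh Fb.K Fb.σ Fb.ψ n t2 x v := fun x => (duh_pt Fb hCK hT n v hv t2 ht2 x).1
  have hgI : 0 ≤ ∫ x, duh Fb.K Fb.σ Fb.ψ n t2 x v := integral_nonneg hgnn
  have hKb1 := Fa.hK v' hv' 1 one_mem_V
  have hKb2 := Fa.hK v' hv' (-1) negone_mem_V
  have hσa := Fa.hσ v' hv'
  have h2CK : (0:ℝ) ≤ 2*CK*T := by nlinarith
  have hM'nn : 0 ≤ (2*CK*T)^(k+n) * M := mul_nonneg (pow_nonneg h2CK _) hM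
  have hBann : 0 ≤ (2*CK*T)^k * Fa.Cψ := mul_nonneg (pow_nonneg h2CK _) Fa.hCψ
  have hsub : ∀ s ∈ Ioc (0:ℝ) t1, t1 - s ∈ Icc (0:ℝ) T :=
    fun s hs => ⟨by linarith [hs.2], by linarith [hs.1]⟩
  -- the nonnegativity part
  refine ⟨integral_nonneg (fun x => mul_nonneg
      (duh_pt Fa hCK hT (k+1) v' hv' t1 ⟨ht10, ht1T⟩ (x+c)).1 (hgnn x)), ?_⟩
  -- the double-integral representation
  have hfun : ∀ x, duh Fa.K Fa.σ Fa.ψ (k+1) t1 (x+c) v' * duh Fb.K Fb.σ Fb.ψ n t2 x v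
      = ∫ s in Ioc (0:ℝ) t1, (Real.exp (-s * Fa.σ v') *
        (Fa.K v' 1 * duh Fa.K Fa.σ Fa.ψ k (t1 - s) (x + c - v' * s) 1 +
         Fa.K v' (-1) * duh Fa.K Fa.σ Fa.ψ k (t1 - s) (x + c - v' * s) (-1))) *
          duh Fb.K Fb.σ Fb.ψ n t2 x v := by
    intro x
    have hrepr : duh Fa.K Fa.σ Fa.ψ (k+1) t1 (x+c) v' = ∫ s in Ioc (0:ℝ) t1,
        Real.exp (-s * Fa.σ v') *
        (Fa.K v' 1 * duh Fa.K Fa.σ Fa.ψ k (t1 - s) (x + c - v' * s) 1 +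
         Fa.K v' (-1) * duh Fa.K Fa.σ Fa.ψ k (t1 - s) (x + c - v' * s) (-1)) := by
      show intervalIntegral _ 0 t1 volume = _
      rw [intervalIntegral.integral_of_le ht10]
    rw [hrepr, ← MeasureTheory.integral_mul_const]
  -- measurability of the kernel on the product
  have hmeasH : Measurable (fun q : ℝ × ℝ => (Real.exp (-q.1 * Fa.σ v') *
      (Fa.K v' 1 * duh Fa.K Fa.σ Fa.ψ k (t1 - q.1) (q.2 + c - v' * q.1) 1 +
       Fa.K v' (-1) * duh Fa.K Fa.σ Fa.ψ k (t1 - q.1) (q.2 + c - v' * q.1) (-1))) *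
        duh Fb.K Fb.σ Fb.ψ n t2 q.2 v) := by
    have hmap : Measurable (fun q : ℝ × ℝ => ((t1 - q.1 : ℝ), (q.2 + c - v' * q.1 : ℝ))) :=
      (measurable_const.sub measurable_fst).prodMk
        ((measurable_snd.add_const c).sub (measurable_fst.const_mul v'))
    exact (((measurable_fst.neg.mul_const _).exp).mul
      ((((duh_meas Fa k 1).comp hmap).const_mul _).add
        (((duh_meas Fa k (-1)).comp hmap).const_mul _))).mul
      ((duh_meas Fb n v).comp (measurable_const.prodMk measurable_snd))
  -- pointwise facts on the strip
  have hbodybd : ∀ s ∈ Ioc (0:ℝ) t1, ∀ x,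
      0 ≤ Real.exp (-s * Fa.σ v') *
        (Fa.K v' 1 * duh Fa.K Fa.σ Fa.ψ k (t1 - s) (x + c - v' * s) 1 +
         Fa.K v' (-1) * duh Fa.K Fa.σ Fa.ψ k (t1 - s) (x + c - v' * s) (-1)) ∧
      Real.exp (-s * Fa.σ v') *
        (Fa.K v' 1 * duh Fa.K Fa.σ Fa.ψ k (t1 - s) (x + c - v' * s) 1 +
         Fa.K v' (-1) * duh Fa.K Fa.σ Fa.ψ k (t1 - s) (x + c - v' * s) (-1))
        ≤ 2*CK*((2*CK*T)^k * Fa.Cψ) := by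
    intro s hs x
    obtain ⟨l1, u1⟩ := duh_pt Fa hCK hT k 1 one_mem_V (t1 - s) (hsub s hs) (x + c - v' * s)
    obtain ⟨l2, u2⟩ := duh_pt Fa hCK hT k (-1) negone_mem_V (t1 - s) (hsub s hs) (x + c - v' * s)
    have hexp : Real.exp (-s * Fa.σ v') ≤ 1 := by
      rw [Real.exp_le_one_iff]; nlinarith [hs.1.le]
    have hinn : 0 ≤ Fa.K v' 1 * duh Fa.K Fa.σ Fa.ψ k (t1 - s) (x + c - v' * s) 1 +
        Fa.K v' (-1) * duh Fa.K Fa.σ Fa.ψ k (t1 - s) (x + c - v' * s) (-1) :=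
      add_nonneg (mul_nonneg hKb1.1 l1) (mul_nonneg hKb2.1 l2)
    refine ⟨mul_nonneg (Real.exp_pos _).le hinn, ?_⟩
    have g1 : Fa.K v' 1 * duh Fa.K Fa.σ Fa.ψ k (t1 - s) (x + c - v' * s) 1
        ≤ CK * ((2*CK*T)^k * Fa.Cψ) := mul_le_mul hKb1.2 u1 l1 hCK
    have g2 : Fa.K v' (-1) * duh Fa.K Fa.σ Fa.ψ k (t1 - s) (x + c - v' * s) (-1)
        ≤ CK * ((2*CK*T)^k * Fa.Cψ) := mul_le_mul hKb2.2 u2 l2 hCK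
    calc Real.exp (-s * Fa.σ v') * _ ≤ _ := mul_le_of_le_one_left hinn hexp
      _ ≤ 2*CK*((2*CK*T)^k * Fa.Cψ) := by linarith
  have hsecInt : ∀ s ∈ Ioc (0:ℝ) t1, Integrable (fun x => (Real.exp (-s * Fa.σ v') *
      (Fa.K v' 1 * duh Fa.K Fa.σ Fa.ψ k (t1 - s) (x + c - v' * s) 1 +
       Fa.K v' (-1) * duh Fa.K Fa.σ Fa.ψ k (t1 - s) (x + c - v' * s) (-1))) *
        duh Fb.K Fb.σ Fb.ψ n t2 x v) := by
    intro s hs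
    refine Integrable.bdd_mul (c := 2*CK*((2*CK*T)^k * Fa.Cψ)) hgint ?_ ?_
    · have hmap : Measurable (fun x : ℝ => ((t1 - s : ℝ), (x + c - v' * s : ℝ))) :=
        measurable_const.prodMk ((measurable_id.add_const c).sub_const (v' * s))
      exact (measurable_const.mul
        ((((duh_meas Fa k 1).comp hmap).const_mul _).add
          (((duh_meas Fa k (-1)).comp hmap).const_mul _))).aestronglyMeasurable
    · refine ae_of_all _ fun x => ?_
      obtain ⟨l, u⟩ := hbodybd s hs x
      rw [Real.norm_of_nonneg l]
      exact u
  have hsecnn : ∀ s ∈ Ioc (0:ℝ) t1, ∀ x, 0 ≤ (Real.exp (-s * Fa.σ v') *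
      (Fa.K v' 1 * duh Fa.K Fa.σ Fa.ψ k (t1 - s) (x + c - v' * s) 1 +
       Fa.K v' (-1) * duh Fa.K Fa.σ Fa.ψ k (t1 - s) (x + c - v' * s) (-1))) *
        duh Fb.K Fb.σ Fb.ψ n t2 x v :=
    fun s hs x => mul_nonneg (hbodybd s hs x).1 (hgnn x)
  have hsecbd : ∀ s ∈ Ioc (0:ℝ) t1, (∫ x, (Real.exp (-s * Fa.σ v') *
      (Fa.K v' 1 * duh Fa.K Fa.σ Fa.ψ k (t1 - s) (x + c - v' * s) 1 +
       Fa.K v' (-1) * duh Fa.K Fa.σ Fa.ψ k (t1 - s) (x + c - v' * s) (-1))) *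
        duh Fb.K Fb.σ Fb.ψ n t2 x v) ≤ 2*CK*((2*CK*T)^(k+n) * M) := by
    intro s hs
    have hmap1 : Measurable (fun x : ℝ => duh Fa.K Fa.σ Fa.ψ k (t1-s) (x + (c - v' * s)) 1) :=
      (duh_meas Fa k 1).comp (measurable_const.prodMk (measurable_id.add_const _))
    have hmap2 : Measurable (fun x : ℝ => duh Fa.K Fa.σ Fa.ψ k (t1-s) (x + (c - v' * s)) (-1)) :=
      (duh_meas Fa k (-1)).comp (measurable_const.prodMk (measurable_id.add_const _))
    have hint1 : Integrable (fun x => duh Fa.K Fa.σ Fa.ψ k (t1-s) (x + (c - v' * s)) 1 *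
        duh Fb.K Fb.σ Fb.ψ n t2 x v) := by
      refine Integrable.bdd_mul (c := (2*CK*T)^k * Fa.Cψ) hgint hmap1.aestronglyMeasurable ?_
      refine ae_of_all _ fun x => ?_
      obtain ⟨l, u⟩ := duh_pt Fa hCK hT k 1 one_mem_V (t1-s) (hsub s hs) (x + (c - v' * s))
      rw [Real.norm_of_nonneg l]; exact u
    have hint2 : Integrable (fun x => duh Fa.K Fa.σ Fa.ψ k (t1-s) (x + (c - v' * s)) (-1) *
        duh Fb.K Fb.σ Fb.ψ n t2 x v) := by
      refine Integrable.bdd_mul (c := (2*CK*T)^k * Fa.Cψ) hgint hmap2.aestronglyMeasurable ?_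
      refine ae_of_all _ fun x => ?_
      obtain ⟨l, u⟩ := duh_pt Fa hCK hT k (-1) negone_mem_V (t1-s) (hsub s hs) (x + (c - v' * s))
      rw [Real.norm_of_nonneg l]; exact u
    obtain ⟨i1l, i1u⟩ := h 1 one_mem_V v hv (t1 - s) (hsub s hs) t2 ht2 (c - v' * s)
    obtain ⟨i2l, i2u⟩ := h (-1) negone_mem_V v hv (t1 - s) (hsub s hs) t2 ht2 (c - v' * s)
    have hexp : Real.exp (-s * Fa.σ v') ≤ 1 := by
      rw [Real.exp_le_one_iff]; nlinarith [hs.1.le]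
    have hcalc : (∫ x, (Real.exp (-s * Fa.σ v') *
        (Fa.K v' 1 * duh Fa.K Fa.σ Fa.ψ k (t1 - s) (x + c - v' * s) 1 +
         Fa.K v' (-1) * duh Fa.K Fa.σ Fa.ψ k (t1 - s) (x + c - v' * s) (-1))) *
          duh Fb.K Fb.σ Fb.ψ n t2 x v)
        = Real.exp (-s * Fa.σ v') * (Fa.K v' 1 *
            ∫ x, duh Fa.K Fa.σ Fa.ψ k (t1-s) (x + (c - v' * s)) 1 * duh Fb.K Fb.σ Fb.ψ n t2 x v)
          + Real.exp (-s * Fa.σ v') * (Fa.K v' (-1) *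
            ∫ x, duh Fa.K Fa.σ Fa.ψ k (t1-s) (x + (c - v' * s)) (-1) * duh Fb.K Fb.σ Fb.ψ n t2 x v) := by
      rw [← MeasureTheory.integral_const_mul, ← MeasureTheory.integral_const_mul,
        ← MeasureTheory.integral_const_mul, ← MeasureTheory.integral_const_mul,
        ← integral_add ((hint1.const_mul _).const_mul _) ((hint2.const_mul _).const_mul _)]
      congr 1
      funext x
      rw [show x + (c - v' * s) = x + c - v' * s from by ring]
      ring
    rw [hcalc]
    have q1 : Real.exp (-s * Fa.σ v') * (Fa.K v' 1 *
        ∫ x, duh Fa.K Fa.σ Fa.ψ k (t1-s) (x + (c - v' * s)) 1 * duh Fb.K Fb.σ Fb.ψ n t2 x v)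
        ≤ Fa.K v' 1 * ∫ x, duh Fa.K Fa.σ Fa.ψ k (t1-s) (x + (c - v' * s)) 1 *
          duh Fb.K Fb.σ Fb.ψ n t2 x v :=
      mul_le_of_le_one_left (mul_nonneg hKb1.1 i1l) hexp
    have q2 : Real.exp (-s * Fa.σ v') * (Fa.K v' (-1) *
        ∫ x, duh Fa.K Fa.σ Fa.ψ k (t1-s) (x + (c - v' * s)) (-1) * duh Fb.K Fb.σ Fb.ψ n t2 x v)
        ≤ Fa.K v' (-1) * ∫ x, duh Fa.K Fa.σ Fa.ψ k (t1-s) (x + (c - v' * s)) (-1) *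
          duh Fb.K Fb.σ Fb.ψ n t2 x v :=
      mul_le_of_le_one_left (mul_nonneg hKb2.1 i2l) hexp
    have g1 := mul_le_mul hKb1.2 i1u i1l hCK
    have g2 := mul_le_mul hKb2.2 i2u i2l hCK
    linarith
  -- product integrability
  have hprodInt : Integrable (fun q : ℝ × ℝ => (Real.exp (-q.1 * Fa.σ v') *
      (Fa.K v' 1 * duh Fa.K Fa.σ Fa.ψ k (t1 - q.1) (q.2 + c - v' * q.1) 1 +
       Fa.K v' (-1) * duh Fa.K Fa.σ Fa.ψ k (t1 - q.1) (q.2 + c - v' * q.1) (-1))) *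
        duh Fb.K Fb.σ Fb.ψ n t2 q.2 v)
      ((volume.restrict (Ioc (0:ℝ) t1)).prod volume) := by
    rw [integrable_prod_iff hmeasH.aestronglyMeasurable]
    constructor
    · filter_upwards [ae_restrict_mem measurableSet_Ioc] with s hs
      exact hsecInt s hs
    · have hm2 : StronglyMeasurable (fun s : ℝ => ∫ x, ‖(Real.exp (-s * Fa.σ v') *
          (Fa.K v' 1 * duh Fa.K Fa.σ Fa.ψ k (t1 - s) (x + c - v' * s) 1 +
           Fa.K v' (-1) * duh Fa.K Fa.σ Fa.ψ k (t1 - s) (x + c - v' * s) (-1))) *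
            duh Fb.K Fb.σ Fb.ψ n t2 x v‖) :=
        StronglyMeasurable.integral_prod_right (hmeasH.norm.stronglyMeasurable)
      refine integrableOn_of_bounded' (C := 2*CK*((2*CK*T)^(k+n) * M))
        (by rw [Real.volume_Ioc]; exact ENNReal.ofReal_ne_top) hm2.aestronglyMeasurable ?_
      filter_upwards [ae_restrict_mem measurableSet_Ioc] with s hs
      have heq2 : (∫ x, ‖(Real.exp (-s * Fa.σ v') *
          (Fa.K v' 1 * duh Fa.K Fa.σ Fa.ψ k (t1 - s) (x + c - v' * s) 1 +
           Fa.K v' (-1) * duh Fa.K Fa.σ Fa.ψ k (t1 - s) (x + c - v' * s) (-1))) *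
            duh Fb.K Fb.σ Fb.ψ n t2 x v‖)
          = ∫ x, (Real.exp (-s * Fa.σ v') *
          (Fa.K v' 1 * duh Fa.K Fa.σ Fa.ψ k (t1 - s) (x + c - v' * s) 1 +
           Fa.K v' (-1) * duh Fa.K Fa.σ Fa.ψ k (t1 - s) (x + c - v' * s) (-1))) *
            duh Fb.K Fb.σ Fb.ψ n t2 x v := by
        congr 1; funext x; exact Real.norm_of_nonneg (hsecnn s hs x)
      rw [Real.norm_of_nonneg (by rw [heq2]; exact integral_nonneg (hsecnn s hs)), heq2]
      exact hsecbd s hs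
  -- assembling
  have hswap := integral_integral_swap (f := fun s x => (Real.exp (-s * Fa.σ v') *
      (Fa.K v' 1 * duh Fa.K Fa.σ Fa.ψ k (t1 - s) (x + c - v' * s) 1 +
       Fa.K v' (-1) * duh Fa.K Fa.σ Fa.ψ k (t1 - s) (x + c - v' * s) (-1))) *
        duh Fb.K Fb.σ Fb.ψ n t2 x v) hprodInt
  have hconstInt : IntegrableOn (fun _ : ℝ => 2*CK*((2*CK*T)^(k+n) * M))
      (Ioc (0:ℝ) t1) volume := by
    apply Iff.mpr integrableOn_const_iff
    right
    rw [Real.volume_Ioc]; exact ENNReal.ofReal_lt_top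
  have hCnn : 0 ≤ 2*CK*((2*CK*T)^(k+n) * M) := by nlinarith [mul_nonneg hCK hM'nn]
  calc (∫ x, duh Fa.K Fa.σ Fa.ψ (k+1) t1 (x + c) v' * duh Fb.K Fb.σ Fb.ψ n t2 x v)
      = ∫ x, ∫ s in Ioc (0:ℝ) t1, (Real.exp (-s * Fa.σ v') *
          (Fa.K v' 1 * duh Fa.K Fa.σ Fa.ψ k (t1 - s) (x + c - v' * s) 1 +
           Fa.K v' (-1) * duh Fa.K Fa.σ Fa.ψ k (t1 - s) (x + c - v' * s) (-1))) *
            duh Fb.K Fb.σ Fb.ψ n t2 x v := integral_congr_ae (ae_of_all _ hfun)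
    _ = ∫ s in Ioc (0:ℝ) t1, ∫ x, (Real.exp (-s * Fa.σ v') *
          (Fa.K v' 1 * duh Fa.K Fa.σ Fa.ψ k (t1 - s) (x + c - v' * s) 1 +
           Fa.K v' (-1) * duh Fa.K Fa.σ Fa.ψ k (t1 - s) (x + c - v' * s) (-1))) *
            duh Fb.K Fb.σ Fb.ψ n t2 x v := hswap.symm
    _ ≤ ∫ _ in Ioc (0:ℝ) t1, 2*CK*((2*CK*T)^(k+n) * M) :=
        setIntegral_mono_on hprodInt.integral_prod_left hconstInt
          measurableSet_Ioc (fun s hs => hsecbd s hs)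
    _ = (volume (Ioc (0:ℝ) t1)).toReal * (2*CK*((2*CK*T)^(k+n) * M)) := by
        rw [setIntegral_const, smul_eq_mul]; rfl
    _ ≤ T * (2*CK*((2*CK*T)^(k+n) * M)) := by
        rw [Real.volume_Ioc, ENNReal.toReal_ofReal (by linarith)]
        have : t1 - 0 = t1 := by ring
        rw [this]
        exact mul_le_mul_of_nonneg_right ht1T hCnn
    _ = (2*CK*T)^(k+1+n) * M := by
        rw [show k+1+n = (k+n)+1 from by omega, pow_succ]
        ring

lemma BLP_all (hCK : 0 ≤ CK) (hT : 0 < T) (Fa Fb : Fam CK T) (M : ℝ) (hM : 0 ≤ M)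
    (hcross : ∀ a b : ℝ, (∫ x, Fa.ψ (x + a) * Fb.ψ (x + b)) ≤ M) :
    ∀ k n, BLP CK T Fa Fb M k n := by
  have hcross' : ∀ a b : ℝ, (∫ x, Fb.ψ (x + a) * Fa.ψ (x + b)) ≤ M := by
    intro a b
    have : (∫ x, Fb.ψ (x + a) * Fa.ψ (x + b)) = ∫ x, Fa.ψ (x + b) * Fb.ψ (x + a) := by
      congr 1; funext x; ring
    rw [this]; exact hcross b a
  intro k
  induction k with
  | zero =>
    intro n
    induction n with
    | zero => exact BLP_base hCK hT Fa Fb M hcross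
    | succ n ihn => exact BLP_comm (BLP_step hCK hT Fb Fa M hM n 0 (BLP_comm ihn))
  | succ k ihk => exact fun n => BLP_step hCK hT Fa Fb M hM k n (ihk n)

lemma measurable_version {f : ℝ → ℝ} (hf : Integrable f) (hf0 : ∀ x, 0 ≤ f x)
    {C : ℝ} (hfC : ∀ x, f x ≤ C) (hC : 0 ≤ C) :
    ∃ g : ℝ → ℝ, Measurable g ∧ (∀ x, 0 ≤ g x) ∧ (∀ x, g x ≤ C) ∧ Integrable g ∧
      volume {x | f x ≠ g x} = 0 := by
  have hsm := hf.aestronglyMeasurable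
  have hae : f =ᵐ[volume] fun x => min (max (hsm.mk f x) 0) C := by
    filter_upwards [hsm.ae_eq_mk] with x hx
    rw [← hx, max_eq_left (hf0 x), min_eq_left (hfC x)]
  refine ⟨fun x => min (max (hsm.mk f x) 0) C, ?_, ?_, ?_, ?_, ?_⟩
  · exact (hsm.stronglyMeasurable_mk.measurable.max measurable_const).min measurable_const
  · exact fun x => le_min (le_max_right _ _) hC
  · exact fun x => min_le_right _ _
  · exact hf.congr hae
  · exact ae_iff.mp hae

lemma duh_meas' {CK : ℝ} (K : ℝ → ℝ → ℝ) (σ ψ : ℝ → ℝ) (Cψ : ℝ)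
    (hK : ∀ w ∈ ({1, -1} : Set ℝ), ∀ w' ∈ ({1, -1} : Set ℝ), 0 ≤ K w w' ∧ K w w' ≤ CK)
    (hσ2 : ∀ w ∈ ({1, -1} : Set ℝ), 0 ≤ σ w)
    (hψm : Measurable ψ) (hψ0 : ∀ x, 0 ≤ ψ x) (hCψ : 0 ≤ Cψ) (hψC : ∀ x, ψ x ≤ Cψ)
    (hψi : Integrable ψ) :
    ∀ k, ∀ w : ℝ, Measurable (fun p : ℝ × ℝ => duh K σ ψ k p.1 p.2 w) :=
  duh_meas (⟨K, σ, ψ, Cψ, hK, hσ2, hψm, hψ0, hCψ, hψC, hψi⟩ : Fam CK 1)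

lemma duh_pt' {CK T : ℝ} (hCK : 0 ≤ CK) (hT : 0 < T) (K : ℝ → ℝ → ℝ) (σ ψ : ℝ → ℝ) (Cψ : ℝ)
    (hK : ∀ w ∈ ({1, -1} : Set ℝ), ∀ w' ∈ ({1, -1} : Set ℝ), 0 ≤ K w w' ∧ K w w' ≤ CK)
    (hσ2 : ∀ w ∈ ({1, -1} : Set ℝ), 0 ≤ σ w)
    (hψm : Measurable ψ) (hψ0 : ∀ x, 0 ≤ ψ x) (hCψ : 0 ≤ Cψ) (hψC : ∀ x, ψ x ≤ Cψ)
    (hψi : Integrable ψ) :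
    ∀ k, ∀ w ∈ ({1, -1} : Set ℝ), ∀ t ∈ Icc (0:ℝ) T, ∀ x,
    0 ≤ duh K σ ψ k t x w ∧ duh K σ ψ k t x w ≤ (2*CK*T)^k * Cψ :=
  duh_pt (⟨K, σ, ψ, Cψ, hK, hσ2, hψm, hψ0, hCψ, hψC, hψi⟩ : Fam CK T) hCK hT

lemma duh_int' {CK T : ℝ} (hCK : 0 ≤ CK) (hT : 0 < T) (K : ℝ → ℝ → ℝ) (σ ψ : ℝ → ℝ) (Cψ : ℝ)
    (hK : ∀ w ∈ ({1, -1} : Set ℝ), ∀ w' ∈ ({1, -1} : Set ℝ), 0 ≤ K w w' ∧ K w w' ≤ CK)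
    (hσ2 : ∀ w ∈ ({1, -1} : Set ℝ), 0 ≤ σ w)
    (hψm : Measurable ψ) (hψ0 : ∀ x, 0 ≤ ψ x) (hCψ : 0 ≤ Cψ) (hψC : ∀ x, ψ x ≤ Cψ)
    (hψi : Integrable ψ) :
    ∀ k, ∀ w ∈ ({1, -1} : Set ℝ), ∀ t ∈ Icc (0:ℝ) T,
    Integrable (fun x => duh K σ ψ k t x w) ∧
    (∫ x, duh K σ ψ k t x w) ≤ (2*CK*T)^k * (∫ x, ψ x) :=
  duh_int (⟨K, σ, ψ, Cψ, hK, hσ2, hψm, hψ0, hCψ, hψC, hψi⟩ : Fam CK T) hCK hT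

lemma BLP_all' {CK T : ℝ} (hCK : 0 ≤ CK) (hT : 0 < T)
    (K : ℝ → ℝ → ℝ) (σ ψ : ℝ → ℝ) (Cψ : ℝ)
    (hK : ∀ w ∈ ({1, -1} : Set ℝ), ∀ w' ∈ ({1, -1} : Set ℝ), 0 ≤ K w w' ∧ K w w' ≤ CK)
    (hσ2 : ∀ w ∈ ({1, -1} : Set ℝ), 0 ≤ σ w)
    (hψm : Measurable ψ) (hψ0 : ∀ x, 0 ≤ ψ x) (hCψ : 0 ≤ Cψ) (hψC : ∀ x, ψ x ≤ Cψ)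
    (hψi : Integrable ψ)
    (Kb : ℝ → ℝ → ℝ) (σb ψb : ℝ → ℝ) (Cψb : ℝ)
    (hKb : ∀ w ∈ ({1, -1} : Set ℝ), ∀ w' ∈ ({1, -1} : Set ℝ), 0 ≤ Kb w w' ∧ Kb w w' ≤ CK)
    (hσ2b : ∀ w ∈ ({1, -1} : Set ℝ), 0 ≤ σb w)
    (hψmb : Measurable ψb) (hψ0b : ∀ x, 0 ≤ ψb x) (hCψb : 0 ≤ Cψb) (hψCb : ∀ x, ψb x ≤ Cψb)
    (hψib : Integrable ψb)
    (M : ℝ) (hM : 0 ≤ M)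
    (hcross : ∀ a b : ℝ, (∫ x, ψ (x + a) * ψb (x + b)) ≤ M) :
    ∀ k n, ∀ v' ∈ ({1, -1} : Set ℝ), ∀ v ∈ ({1, -1} : Set ℝ),
      ∀ t1 ∈ Icc (0:ℝ) T, ∀ t2 ∈ Icc (0:ℝ) T, ∀ c : ℝ,
      0 ≤ (∫ x, duh K σ ψ k t1 (x + c) v' * duh Kb σb ψb n t2 x v) ∧
      (∫ x, duh K σ ψ k t1 (x + c) v' * duh Kb σb ψb n t2 x v) ≤ (2*CK*T)^(k+n) * M :=
  BLP_all hCK hT (⟨K, σ, ψ, Cψ, hK, hσ2, hψm, hψ0, hCψ, hψC, hψi⟩ : Fam CK T)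
    (⟨Kb, σb, ψb, Cψb, hKb, hσ2b, hψmb, hψ0b, hCψb, hψCb, hψib⟩ : Fam CK T) M hM hcross


end IterScat
/-- iterated scattering bound. For the Duhamel (source-iteration) components
`f^{(k)}`, `g^{(n)}` of the forward and adjoint solutions with constant-in-space kernel
`K₁` on `V = {−1,1}`, one has
`0 ≤ ∫₀ᵀ∫_ℝ f^{(k)}(v') g^{(n)}(v) dx dt ≤ (2C_K)^{n+k} T^{n+k+1} C_{φμ}` and hence
`|∫₀ᵀ∫_I f^{(k)}(v')(g^{(n)}(v') − g^{(n)}(v)) dx dt| ≤ 2 (2C_K)^{n+k} T^{n+k+1} C_{φμ}`. -/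
theorem iterated_scattering_bound
    (CK T Cφμ : ℝ) (hCK : 0 ≤ CK) (hT : 0 < T)
    (K₁ : ℝ → ℝ → ℝ)
    (hK₁ : ∀ v ∈ ({1, -1} : Set ℝ), ∀ v' ∈ ({1, -1} : Set ℝ),
      0 ≤ K₁ v v' ∧ K₁ v v' ≤ CK)
    (σ₁ : ℝ → ℝ) (hσ : ∀ w, σ₁ w = K₁ 1 w + K₁ (-1) w)
    (φ₁ μ₁ : ℝ → ℝ)
    (hφ_int : Integrable φ₁) (hφ_bdd : ∃ C, ∀ x, φ₁ x ≤ C) (hφ_nonneg : ∀ x, 0 ≤ φ₁ x)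
    (hμ_int : Integrable μ₁) (hμ_bdd : ∃ C, ∀ x, μ₁ x ≤ C) (hμ_nonneg : ∀ x, 0 ≤ μ₁ x)
    (hCφμ : ∀ a b : ℝ, (∫ x : ℝ, φ₁ (x + a) * μ₁ (x - T + b)) ≤ Cφμ)
    (fseq gseq : ℕ → ℝ → ℝ → ℝ → ℝ)
    (hf0 : ∀ t x : ℝ, ∀ w ∈ ({1, -1} : Set ℝ),
      fseq 0 t x w = Real.exp (-t * σ₁ w) * φ₁ (x - w * t))
    (hg0 : ∀ t x : ℝ, ∀ w ∈ ({1, -1} : Set ℝ),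
      gseq 0 t x w = Real.exp (-(T - t) * σ₁ w) * μ₁ (x + w * (T - t)))
    (hfrec : ∀ k : ℕ, ∀ t x : ℝ, ∀ w ∈ ({1, -1} : Set ℝ),
      fseq (k + 1) t x w = ∫ s in (0 : ℝ)..t, Real.exp (-s * σ₁ w) *
        (K₁ w 1 * fseq k (t - s) (x - w * s) 1
          + K₁ w (-1) * fseq k (t - s) (x - w * s) (-1)))
    (hgrec : ∀ n : ℕ, ∀ t x : ℝ, ∀ w ∈ ({1, -1} : Set ℝ),
      gseq (n + 1) t x w = ∫ s in (0 : ℝ)..(T - t), Real.exp (-s * σ₁ w) *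
        (K₁ 1 w * gseq n (t + s) (x + w * s) 1
          + K₁ (-1) w * gseq n (t + s) (x + w * s) (-1))) :
    ∀ k n : ℕ, ∀ v ∈ ({1, -1} : Set ℝ), ∀ v' ∈ ({1, -1} : Set ℝ),
      (0 ≤ ∫ t in (0 : ℝ)..T, ∫ x : ℝ, fseq k t x v' * gseq n t x v) ∧
      ((∫ t in (0 : ℝ)..T, ∫ x : ℝ, fseq k t x v' * gseq n t x v)
          ≤ (2 * CK) ^ (n + k) * T ^ (n + k + 1) * Cφμ) ∧
      (∀ I : Set ℝ, MeasurableSet I →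
        |∫ t in (0 : ℝ)..T, ∫ x in I, fseq k t x v' * (gseq n t x v' - gseq n t x v)|
          ≤ 2 * (2 * CK) ^ (n + k) * T ^ (n + k + 1) * Cφμ) := by
  obtain ⟨Cφ0, hCφ0⟩ := hφ_bdd
  obtain ⟨Cμ0, hCμ0⟩ := hμ_bdd
  obtain ⟨φ', hφ'm, hφ'0, hφ'C, hφ'i, hNφ⟩ :=
    IterScat.measurable_version hφ_int hφ_nonneg (C := max Cφ0 0)
      (fun x => le_trans (hCφ0 x) (le_max_left _ _)) (le_max_right _ _)
  obtain ⟨μ', hμ'm, hμ'0, hμ'C, hμ'i, hNμ⟩ :=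
    IterScat.measurable_version hμ_int hμ_nonneg (C := max Cμ0 0)
      (fun x => le_trans (hCμ0 x) (le_max_left _ _)) (le_max_right _ _)
  have hσA : ∀ w ∈ ({1, -1} : Set ℝ), 0 ≤ σ₁ w := by
    intro w hw
    rw [hσ w]
    exact add_nonneg (hK₁ 1 IterScat.one_mem_V w hw).1 (hK₁ (-1) IterScat.negone_mem_V w hw).1
  have hσB : ∀ w ∈ ({1, -1} : Set ℝ), 0 ≤ (fun w => σ₁ (-w)) w :=
    fun w hw => hσA (-w) (IterScat.neg_mem_V hw)
  have hKB : ∀ w ∈ ({1, -1} : Set ℝ), ∀ w' ∈ ({1, -1} : Set ℝ),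
      0 ≤ (fun w w' => K₁ (-w') (-w)) w w' ∧ (fun w w' => K₁ (-w') (-w)) w w' ≤ CK :=
    fun w hw w' hw' => hK₁ (-w') (IterScat.neg_mem_V hw') (-w) (IterScat.neg_mem_V hw)
  -- off-null-set identification of fseq with the measurable model
  have lemA : ∀ k, ∀ w ∈ ({1, -1} : Set ℝ), ∀ t x : ℝ,
      (x - w * t) ∉ {y | φ₁ y ≠ φ' y} → fseq k t x w = IterScat.duh K₁ σ₁ φ' k t x w := by
    intro k
    induction k with
    | zero =>
      intro w hw t x hx
      rw [hf0 t x w hw]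
      have hval : φ₁ (x - w * t) = φ' (x - w * t) := not_not.mp hx
      simp only [IterScat.duh]
      rw [hval]
    | succ k ih =>
      intro w hw t x hx
      rw [hfrec k t x w hw]
      simp only [IterScat.duh]
      apply intervalIntegral.integral_congr_ae
      have hterm : ∀ w'' ∈ ({1, -1} : Set ℝ), ∀ᵐ s : ℝ,
          fseq k (t - s) (x - w * s) w'' = IterScat.duh K₁ σ₁ φ' k (t - s) (x - w * s) w'' := by
        intro w'' hw''
        by_cases hww : w'' = w
        · subst hww
          refine Filter.Eventually.of_forall fun s => ih w'' hw'' (t - s) (x - w'' * s) ?_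
          rwa [show x - w'' * s - w'' * (t - s) = x - w'' * t from by ring]
        · have hnull := IterScat.null_affine (sub_ne_zero.mpr hww) (x - w'' * t) hNφ
          filter_upwards [measure_eq_zero_iff_ae_notMem.mp hnull] with s hs
          refine ih w'' hw'' (t - s) (x - w * s) ?_
          rw [show x - w * s - w'' * (t - s) = (w'' - w) * s + (x - w'' * t) from by ring]
          exact hs
      filter_upwards [hterm 1 IterScat.one_mem_V, hterm (-1) IterScat.negone_mem_V] with s h1 h2 _
      rw [h1, h2]
  -- off-null-set identification of (time-reversed) gseq with the measurable model
  have lemB : ∀ n, ∀ w ∈ ({1, -1} : Set ℝ), ∀ t x : ℝ,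
      (x - w * t) ∉ {y | μ₁ y ≠ μ' y} →
      gseq n (T - t) x (-w) = IterScat.duh (fun w w' => K₁ (-w') (-w)) (fun w => σ₁ (-w)) μ' n t x w := by
    intro n
    induction n with
    | zero =>
      intro w hw t x hx
      rw [hg0 (T - t) x (-w) (IterScat.neg_mem_V hw)]
      have hval : μ₁ (x - w * t) = μ' (x - w * t) := not_not.mp hx
      have hrepr : IterScat.duh (fun w w' => K₁ (-w') (-w)) (fun w => σ₁ (-w)) μ' 0 t x w
          = Real.exp (-t * σ₁ (-w)) * μ' (x - w * t) := rfl
      rw [hrepr, show T - (T - t) = t from by ring, show x + -w * t = x - w * t from by ring, hval]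
    | succ n ih =>
      intro w hw t x hx
      rw [hgrec n (T - t) x (-w) (IterScat.neg_mem_V hw)]
      rw [show T - (T - t) = t from by ring]
      have hrepr : IterScat.duh (fun w w' => K₁ (-w') (-w)) (fun w => σ₁ (-w)) μ' (n+1) t x w
          = ∫ s in (0:ℝ)..t, Real.exp (-s * σ₁ (-w)) *
            (K₁ (-1) (-w) * IterScat.duh (fun w w' => K₁ (-w') (-w)) (fun w => σ₁ (-w)) μ' n (t - s) (x - w * s) 1 +
             K₁ (-(-1)) (-w) * IterScat.duh (fun w w' => K₁ (-w') (-w)) (fun w => σ₁ (-w)) μ' n (t - s) (x - w * s) (-1)) := rfl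
      rw [hrepr]
      apply intervalIntegral.integral_congr_ae
      have hterm : ∀ w' ∈ ({1, -1} : Set ℝ), ∀ᵐ s : ℝ,
          gseq n (T - (t - s)) (x - w * s) (-w') =
          IterScat.duh (fun w w' => K₁ (-w') (-w)) (fun w => σ₁ (-w)) μ' n (t - s) (x - w * s) w' := by
        intro w' hw'
        by_cases hww : w' = w
        · subst hww
          refine Filter.Eventually.of_forall fun s => ih w' hw' (t - s) (x - w' * s) ?_
          rwa [show x - w' * s - w' * (t - s) = x - w' * t from by ring]
        · have hnull := IterScat.null_affine (sub_ne_zero.mpr hww) (x - w' * t) hNμ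
          filter_upwards [measure_eq_zero_iff_ae_notMem.mp hnull] with s hs
          refine ih w' hw' (t - s) (x - w * s) ?_
          rw [show x - w * s - w' * (t - s) = (w' - w) * s + (x - w' * t) from by ring]
          exact hs
      filter_upwards [hterm 1 IterScat.one_mem_V, hterm (-1) IterScat.negone_mem_V] with s h1 h2 _
      rw [show x + -w * s = x - w * s from by ring, show T - t + s = T - (t - s) from by ring]
      rw [neg_neg] at h2
      rw [h1, h2, neg_neg]
      ring
  -- translated-overlap bound for the measurable versions
  have haeshift : ∀ (N : Set ℝ), volume N = 0 → ∀ a : ℝ, ∀ᵐ x : ℝ, (x + a) ∉ N := by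
    intro N hN a
    have h0 := IterScat.null_affine one_ne_zero a hN
    filter_upwards [measure_eq_zero_iff_ae_notMem.mp h0] with x hx
    simp only [Set.mem_preimage] at hx
    rwa [show (1:ℝ) * x + a = x + a from by ring] at hx
  have hcross : ∀ a b : ℝ, (∫ x, φ' (x + a) * μ' (x + b)) ≤ Cφμ := by
    intro a b
    have heq : (∫ x, φ' (x + a) * μ' (x + b)) = ∫ x, φ₁ (x + a) * μ₁ (x - T + (b + T)) := by
      apply integral_congr_ae
      filter_upwards [haeshift _ hNφ a, haeshift _ hNμ b] with x h1 h2
      have e1 : φ₁ (x + a) = φ' (x + a) := not_not.mp h1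
      have e2 : μ₁ (x + b) = μ' (x + b) := not_not.mp h2
      rw [show x - T + (b + T) = x + b from by ring, ← e1, ← e2]
    rw [heq]
    exact hCφμ a (b + T)
  have hCφμ0 : 0 ≤ Cφμ :=
    le_trans (integral_nonneg fun x => mul_nonneg (hφ'0 _) (hμ'0 _)) (hcross 0 0)
  have hBL := IterScat.BLP_all' hCK hT K₁ σ₁ φ' (max Cφ0 0) hK₁ hσA hφ'm hφ'0
      (le_max_right _ _) hφ'C hφ'i
      (fun w w' => K₁ (-w') (-w)) (fun w => σ₁ (-w)) μ' (max Cμ0 0) hKB hσB hμ'm hμ'0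
      (le_max_right _ _) hμ'C hμ'i Cφμ hCφμ0 hcross
  intro k n v hv v' hv'
  have hfae : ∀ t : ℝ, ∀ u ∈ ({1, -1} : Set ℝ),
      (fun x => fseq k t x u) =ᵐ[volume] (fun x => IterScat.duh K₁ σ₁ φ' k t x u) := by
    intro t u hu
    filter_upwards [haeshift _ hNφ (-(u*t))] with x hx
    refine lemA k u hu t x ?_
    rwa [show x - u * t = x + -(u*t) from by ring]
  have hgae : ∀ t : ℝ, ∀ u ∈ ({1, -1} : Set ℝ), (fun x => gseq n t x u) =ᵐ[volume]
      (fun x => IterScat.duh (fun w w' => K₁ (-w') (-w)) (fun w => σ₁ (-w)) μ' n (T - t) x (-u)) := by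
    intro t u hu
    filter_upwards [haeshift _ hNμ (u*(T - t))] with x hx
    have h := lemB n (-u) (IterScat.neg_mem_V hu) (T - t) x
      (by rwa [show x - -u * (T - t) = x + u*(T-t) from by ring])
    rwa [show T - (T - t) = t from by ring, neg_neg] at h
  have hBmem : ∀ t : ℝ, t ∈ Icc (0:ℝ) T → (T - t) ∈ Icc (0:ℝ) T :=
    fun t ht => ⟨by linarith [ht.2], by linarith [ht.1]⟩
  have hJ : ∀ u ∈ ({1, -1} : Set ℝ), ∀ t ∈ Icc (0:ℝ) T,
      0 ≤ (∫ x, IterScat.duh K₁ σ₁ φ' k t x v' *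
        IterScat.duh (fun w w' => K₁ (-w') (-w)) (fun w => σ₁ (-w)) μ' n (T - t) x (-u)) ∧
      (∫ x, IterScat.duh K₁ σ₁ φ' k t x v' *
        IterScat.duh (fun w w' => K₁ (-w') (-w)) (fun w => σ₁ (-w)) μ' n (T - t) x (-u))
        ≤ (2*CK*T)^(k+n) * Cφμ := by
    intro u hu t ht
    have h0 := hBL k n v' hv' (-u) (IterScat.neg_mem_V hu) t ht (T - t) (hBmem t ht) 0
    simp only [add_zero] at h0
    exact h0
  have hmA := IterScat.duh_meas' K₁ σ₁ φ' (max Cφ0 0) hK₁ hσA hφ'm hφ'0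
    (le_max_right _ _) hφ'C hφ'i k v'
  have hmB := IterScat.duh_meas' (fun w w' => K₁ (-w') (-w)) (fun w => σ₁ (-w)) μ' (max Cμ0 0)
    hKB hσB hμ'm hμ'0 (le_max_right _ _) hμ'C hμ'i n
  have hmprod : ∀ u : ℝ, Measurable (fun p : ℝ × ℝ => IterScat.duh K₁ σ₁ φ' k p.1 p.2 v' *
      IterScat.duh (fun w w' => K₁ (-w') (-w)) (fun w => σ₁ (-w)) μ' n (T - p.1) p.2 (-u)) :=
    fun u => hmA.mul ((hmB (-u)).comp
      ((measurable_const.sub measurable_fst).prodMk measurable_snd))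
  have hptA := IterScat.duh_pt' hCK hT K₁ σ₁ φ' (max Cφ0 0) hK₁ hσA hφ'm hφ'0
    (le_max_right _ _) hφ'C hφ'i k
  have hptB := IterScat.duh_pt' hCK hT (fun w w' => K₁ (-w') (-w)) (fun w => σ₁ (-w)) μ'
    (max Cμ0 0) hKB hσB hμ'm hμ'0 (le_max_right _ _) hμ'C hμ'i n
  have hintB := IterScat.duh_int' hCK hT (fun w w' => K₁ (-w') (-w)) (fun w => σ₁ (-w)) μ'
    (max Cμ0 0) hKB hσB hμ'm hμ'0 (le_max_right _ _) hμ'C hμ'i n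
  have hprodint : ∀ u ∈ ({1, -1} : Set ℝ), ∀ t ∈ Icc (0:ℝ) T,
      Integrable (fun x => IterScat.duh K₁ σ₁ φ' k t x v' *
        IterScat.duh (fun w w' => K₁ (-w') (-w)) (fun w => σ₁ (-w)) μ' n (T - t) x (-u)) := by
    intro u hu t ht
    refine Integrable.bdd_mul (c := (2*CK*T)^k * (max Cφ0 0)) ((hintB (-u) (IterScat.neg_mem_V hu) (T - t) (hBmem t ht)).1)
      ((hmA.comp (measurable_const.prodMk measurable_id)).aestronglyMeasurable) ?_
    refine ae_of_all _ fun x => ?_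
    obtain ⟨l, u'⟩ := hptA v' hv' t ht x
    rw [Real.norm_of_nonneg l]
    exact u'
  have hnnprod : ∀ u ∈ ({1, -1} : Set ℝ), ∀ t ∈ Icc (0:ℝ) T, ∀ x,
      0 ≤ IterScat.duh K₁ σ₁ φ' k t x v' *
        IterScat.duh (fun w w' => K₁ (-w') (-w)) (fun w => σ₁ (-w)) μ' n (T - t) x (-u) :=
    fun u hu t ht x => mul_nonneg (hptA v' hv' t ht x).1
      ((hptB (-u) (IterScat.neg_mem_V hu) (T - t) (hBmem t ht) x).1)
  have htm : ∀ u : ℝ, StronglyMeasurable (fun t : ℝ => ∫ x, IterScat.duh K₁ σ₁ φ' k t x v' *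
      IterScat.duh (fun w w' => K₁ (-w') (-w)) (fun w => σ₁ (-w)) μ' n (T - t) x (-u)) :=
    fun u => StronglyMeasurable.integral_prod_right ((hmprod u).stronglyMeasurable)
  have htmI : ∀ u : ℝ, ∀ (I : Set ℝ),
      StronglyMeasurable (fun t : ℝ => ∫ x in I, IterScat.duh K₁ σ₁ φ' k t x v' *
      IterScat.duh (fun w w' => K₁ (-w') (-w)) (fun w => σ₁ (-w)) μ' n (T - t) x (-u)) :=
    fun u I => StronglyMeasurable.integral_prod_right (ν := volume.restrict I)
      ((hmprod u).stronglyMeasurable)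
  have hIxeq : ∀ u ∈ ({1, -1} : Set ℝ), ∀ t : ℝ, (∫ x, fseq k t x v' * gseq n t x u) =
      ∫ x, IterScat.duh K₁ σ₁ φ' k t x v' *
        IterScat.duh (fun w w' => K₁ (-w') (-w)) (fun w => σ₁ (-w)) μ' n (T - t) x (-u) :=
    fun u hu t => integral_congr_ae ((hfae t v' hv').mul (hgae t u hu))
  have hEq1 : Set.EqOn (fun t => ∫ x, fseq k t x v' * gseq n t x v)
      (fun t => ∫ x, IterScat.duh K₁ σ₁ φ' k t x v' *
        IterScat.duh (fun w w' => K₁ (-w') (-w)) (fun w => σ₁ (-w)) μ' n (T - t) x (-v))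
      (Set.uIcc 0 T) := fun t _ => hIxeq v hv t
  have hZnn : 0 ≤ (2*CK)^(n+k) * T^(n+k+1) * Cφμ :=
    mul_nonneg (mul_nonneg (pow_nonneg (by linarith) _) (pow_nonneg hT.le _)) hCφμ0
  have hconstval : (∫ _ in (0:ℝ)..T, (2*CK*T)^(k+n) * Cφμ) = (2*CK)^(n+k) * T^(n+k+1) * Cφμ := by
    rw [intervalIntegral.integral_const, smul_eq_mul, sub_zero,
      show n+k = k+n from Nat.add_comm n k, mul_pow, pow_succ]
    ring
  refine ⟨?_, ?_, ?_⟩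
  · rw [intervalIntegral.integral_congr hEq1]
    exact intervalIntegral.integral_nonneg hT.le (fun t ht => (hJ v hv t ht).1)
  · rw [intervalIntegral.integral_congr hEq1]
    have hJii : IntervalIntegrable (fun t => ∫ x, IterScat.duh K₁ σ₁ φ' k t x v' *
        IterScat.duh (fun w w' => K₁ (-w') (-w)) (fun w => σ₁ (-w)) μ' n (T - t) x (-v))
        volume 0 T := by
      rw [intervalIntegrable_iff_integrableOn_Ioc_of_le hT.le]
      refine IterScat.integrableOn_of_bounded' (C := (2*CK*T)^(k+n) * Cφμ)
        (by rw [Real.volume_Ioc]; exact ENNReal.ofReal_ne_top)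
        ((htm v).aestronglyMeasurable) ?_
      filter_upwards [ae_restrict_mem measurableSet_Ioc] with t ht
      obtain ⟨l, u'⟩ := hJ v hv t (Ioc_subset_Icc_self ht)
      rw [Real.norm_of_nonneg l]
      exact u'
    calc _ ≤ ∫ _ in (0:ℝ)..T, (2*CK*T)^(k+n) * Cφμ :=
        intervalIntegral.integral_mono_on hT.le hJii intervalIntegrable_const
          (fun t ht => (hJ v hv t ht).2)
      _ = (2*CK)^(n+k) * T^(n+k+1) * Cφμ := hconstval
  · intro I hI
    have hEq3 : Set.EqOn (fun t => ∫ x in I, fseq k t x v' * (gseq n t x v' - gseq n t x v))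
        (fun t => (∫ x in I, IterScat.duh K₁ σ₁ φ' k t x v' *
          IterScat.duh (fun w w' => K₁ (-w') (-w)) (fun w => σ₁ (-w)) μ' n (T - t) x (-v')) -
          ∫ x in I, IterScat.duh K₁ σ₁ φ' k t x v' *
          IterScat.duh (fun w w' => K₁ (-w') (-w)) (fun w => σ₁ (-w)) μ' n (T - t) x (-v))
        (Set.uIcc 0 T) := by
      intro t ht
      rw [Set.uIcc_of_le hT.le] at ht
      have h1 : IntegrableOn (fun x => fseq k t x v' * gseq n t x v') I volume :=
        ((hprodint v' hv' t ht).integrableOn).congr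
          (ae_restrict_of_ae ((hfae t v' hv').mul (hgae t v' hv')).symm)
      have h2 : IntegrableOn (fun x => fseq k t x v' * gseq n t x v) I volume :=
        ((hprodint v hv t ht).integrableOn).congr
          (ae_restrict_of_ae ((hfae t v' hv').mul (hgae t v hv)).symm)
      show (∫ x in I, fseq k t x v' * (gseq n t x v' - gseq n t x v)) = _
      have hsplit : (fun x => fseq k t x v' * (gseq n t x v' - gseq n t x v)) =
          fun x => fseq k t x v' * gseq n t x v' - fseq k t x v' * gseq n t x v := by
        funext x
        ring
      rw [hsplit, integral_sub h1 h2]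
      congr 1
      · exact integral_congr_ae (ae_restrict_of_ae ((hfae t v' hv').mul (hgae t v' hv')))
      · exact integral_congr_ae (ae_restrict_of_ae ((hfae t v' hv').mul (hgae t v hv)))
    rw [intervalIntegral.integral_congr hEq3]
    have hIb : ∀ u ∈ ({1, -1} : Set ℝ), ∀ t ∈ Icc (0:ℝ) T,
        0 ≤ (∫ x in I, IterScat.duh K₁ σ₁ φ' k t x v' *
          IterScat.duh (fun w w' => K₁ (-w') (-w)) (fun w => σ₁ (-w)) μ' n (T - t) x (-u)) ∧
        (∫ x in I, IterScat.duh K₁ σ₁ φ' k t x v' *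
          IterScat.duh (fun w w' => K₁ (-w') (-w)) (fun w => σ₁ (-w)) μ' n (T - t) x (-u))
          ≤ (2*CK*T)^(k+n) * Cφμ := by
      intro u hu t ht
      refine ⟨setIntegral_nonneg hI (fun x _ => hnnprod u hu t ht x), ?_⟩
      exact le_trans (setIntegral_le_integral (hprodint u hu t ht)
        (Filter.Eventually.of_forall fun x => hnnprod u hu t ht x)) (hJ u hu t ht).2
    have hiiu : ∀ u ∈ ({1, -1} : Set ℝ),
        IntervalIntegrable (fun t => ∫ x in I, IterScat.duh K₁ σ₁ φ' k t x v' *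
          IterScat.duh (fun w w' => K₁ (-w') (-w)) (fun w => σ₁ (-w)) μ' n (T - t) x (-u))
          volume 0 T := by
      intro u hu
      rw [intervalIntegrable_iff_integrableOn_Ioc_of_le hT.le]
      refine IterScat.integrableOn_of_bounded' (C := (2*CK*T)^(k+n) * Cφμ)
        (by rw [Real.volume_Ioc]; exact ENNReal.ofReal_ne_top)
        ((htmI u I).aestronglyMeasurable) ?_
      filter_upwards [ae_restrict_mem measurableSet_Ioc] with t ht
      obtain ⟨l, u'⟩ := hIb u hu t (Ioc_subset_Icc_self ht)
      rw [Real.norm_of_nonneg l]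
      exact u'
    rw [intervalIntegral.integral_sub (hiiu v' hv') (hiiu v hv)]
    have b1 := intervalIntegral.integral_mono_on hT.le (hiiu v' hv') intervalIntegrable_const
      (fun t ht => (hIb v' hv' t ht).2)
    have b1' := intervalIntegral.integral_nonneg (μ := volume) hT.le (fun t ht => (hIb v' hv' t ht).1)
    have b2 := intervalIntegral.integral_mono_on hT.le (hiiu v hv) intervalIntegrable_const
      (fun t ht => (hIb v hv t ht).2)
    have b2' := intervalIntegral.integral_nonneg (μ := volume) hT.le (fun t ht => (hIb v hv t ht).1)
    rw [hconstval] at b1 b2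
    rw [abs_le]
    constructor
    · linarith
    · linarith
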